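/- Let k be a field of characteristic different from 2 and let H(2) be the two-dimensional quasi-Hopf algebra described below. Then: (a) t = 1 + g is a non-zero left integral and a non-zero right integral in H(2), so H(2) is unimodular; and (b) the space of left cointegrals on H(2) is k·P_g, where {P₁, P_g} is the dual basis of the basis {1, g}. -/

import Mathlib

open TensorProduct

namespace QuasiHopfPaper

variable {k H : Type} [Field k] [Ring H] [Algebra k H]

/-- Left contraction: on `a ⊗ b` gives `φ a • b`. -/
noncomputable def lctr (φ : H →ₗ[k] k) : H ⊗[k] H →ₗ[k] H :=
  (TensorProduct.lid k H).toLinearMap ∘ₗ TensorProduct.map φ LinearMap.id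

/-- Right contraction: on `a ⊗ b` gives `φ b • a`. -/
noncomputable def rctr (φ : H →ₗ[k] k) : H ⊗[k] H →ₗ[k] H :=
  (TensorProduct.rid k H).toLinearMap ∘ₗ TensorProduct.map LinearMap.id φ

/-- On `a ⊗ (b ⊗ c)` gives `φ a • ψ b • c`. -/
noncomputable def c12 (φ ψ : H →ₗ[k] k) : H ⊗[k] (H ⊗[k] H) →ₗ[k] H :=
  (TensorProduct.lid k H).toLinearMap ∘ₗ TensorProduct.map φ (lctr ψ)

/-- On `x ⊗ y` (with `x y : H ⊗ H`) gives `x * M * y`. -/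
noncomputable def sandwichMid (M : H ⊗[k] H) :
    (H ⊗[k] H) ⊗[k] (H ⊗[k] H) →ₗ[k] H ⊗[k] H :=
  LinearMap.mul' k (H ⊗[k] H) ∘ₗ TensorProduct.map LinearMap.id (LinearMap.mulLeft k M)

/-- The permutation `a ⊗ (b ⊗ c) ↦ c ⊗ (b ⊗ a)`. -/
noncomputable def perm321 : H ⊗[k] (H ⊗[k] H) →ₗ[k] H ⊗[k] (H ⊗[k] H) :=
  (TensorProduct.map LinearMap.id (TensorProduct.comm k H H).toLinearMap) ∘ₗ
  (TensorProduct.assoc k H H H).toLinearMap ∘ₗ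
  (TensorProduct.map (TensorProduct.comm k H H).toLinearMap LinearMap.id) ∘ₗ
  (TensorProduct.assoc k H H H).symm.toLinearMap ∘ₗ
  (TensorProduct.map LinearMap.id (TensorProduct.comm k H H).toLinearMap)

/-- The data of a quasi-bialgebra with antipode-data over a field `k`:
comultiplication, counit, reassociator and its inverse, antipode `S` and its inverse,
the distinguished elements `α`, `β`, and the modular element `mod` of the dual. -/
structure QHData (k H : Type) [Field k] [Ring H] [Algebra k H] where
  comul : H →ₐ[k] H ⊗[k] H
  counit : H →ₐ[k] k
  Phi : H ⊗[k] (H ⊗[k] H)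
  PhiInv : H ⊗[k] (H ⊗[k] H)
  S : H →ₗ[k] H
  Sinv : H →ₗ[k] H
  alpha : H
  beta : H
  mod : H →ₐ[k] k

namespace QHData

variable (Q : QHData k H)

noncomputable def com : H →ₗ[k] H ⊗[k] H := Q.comul.toLinearMap
noncomputable def cou : H →ₗ[k] k := Q.counit.toLinearMap
noncomputable def mu : H →ₗ[k] k := Q.mod.toLinearMap

/-- `(S ⊗ S) ∘ (swap)`. -/
noncomputable def swapSS : H ⊗[k] H →ₗ[k] H ⊗[k] H :=
  TensorProduct.map Q.S Q.S ∘ₗ (TensorProduct.comm k H H).toLinearMap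

/-- On `b ⊗ c` gives `b * β * S c`. -/
noncomputable def innerPR : H ⊗[k] H →ₗ[k] H :=
  LinearMap.mul' k H ∘ₗ TensorProduct.map (LinearMap.mulRight k Q.beta) Q.S

/-- `p_R = x¹ ⊗ x²βS(x³)`. -/
noncomputable def pR : H ⊗[k] H := TensorProduct.map LinearMap.id Q.innerPR Q.PhiInv

/-- `q_R = X¹ ⊗ S⁻¹(αX³)X²`. -/
noncomputable def qR : H ⊗[k] H :=
  TensorProduct.map LinearMap.id
    (LinearMap.mul' k H ∘ₗ
      TensorProduct.map (Q.Sinv ∘ₗ LinearMap.mulLeft k Q.alpha) LinearMap.id ∘ₗ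
      (TensorProduct.comm k H H).toLinearMap) Q.Phi

/-- `p_L = X²S⁻¹(X¹β) ⊗ X³`. -/
noncomputable def pL : H ⊗[k] H :=
  (LinearMap.mul' k (H ⊗[k] H) ∘ₗ (TensorProduct.comm k (H ⊗[k] H) (H ⊗[k] H)).toLinearMap ∘ₗ
    TensorProduct.map ((TensorProduct.mk k H H).flip 1 ∘ₗ Q.Sinv ∘ₗ LinearMap.mulRight k Q.beta)
      LinearMap.id) Q.Phi

/-- `q_L = S(x¹)αx² ⊗ x³`. -/
noncomputable def qL : H ⊗[k] H :=
  (LinearMap.mul' k (H ⊗[k] H) ∘ₗ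
    TensorProduct.map ((TensorProduct.mk k H H).flip 1 ∘ₗ LinearMap.mulRight k Q.alpha ∘ₗ Q.S)
      LinearMap.id) Q.PhiInv

noncomputable def Mgamma : H ⊗[k] H :=
  (LinearMap.mul' k (H ⊗[k] H) ∘ₗ
    TensorProduct.map
      ((TensorProduct.mk k H H).flip Q.alpha ∘ₗ LinearMap.mulRight k Q.alpha ∘ₗ Q.S)
      LinearMap.id) Q.PhiInv

/-- `γ = S(x¹X²)αx²X³₁ ⊗ S(X¹)αx³X³₂`. -/
noncomputable def gammaEl : H ⊗[k] H :=
  sandwichMid Q.Mgamma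
    (TensorProduct.map Q.swapSS Q.com ((TensorProduct.assoc k H H H).symm Q.Phi))

noncomputable def Mdelta : H ⊗[k] H :=
  TensorProduct.map (LinearMap.mulRight k Q.beta) Q.innerPR Q.PhiInv

/-- `δ = X¹₁x¹βS(X³) ⊗ X¹₂x²βS(X²x³)`. -/
noncomputable def deltaEl : H ⊗[k] H :=
  sandwichMid Q.Mdelta
    (TensorProduct.map Q.com Q.swapSS Q.Phi)

/-- The Drinfeld twist `f = (S⊗S)(Δᶜᵒᵖ(x¹)) γ Δ(x²βS(x³))`. -/
noncomputable def ftw : H ⊗[k] H :=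
  sandwichMid Q.gammaEl
    (TensorProduct.map (Q.swapSS ∘ₗ Q.com) (Q.com ∘ₗ Q.innerPR) Q.PhiInv)

/-- The inverse Drinfeld twist `f⁻¹ = Δ(S(x¹)αx²) δ (S⊗S)(Δᶜᵒᵖ(x³))`. -/
noncomputable def finv : H ⊗[k] H :=
  sandwichMid Q.deltaEl
    (TensorProduct.map
      (Q.com ∘ₗ (LinearMap.mul' k H ∘ₗ
        TensorProduct.map (LinearMap.mulRight k Q.alpha ∘ₗ Q.S) LinearMap.id))
      (Q.swapSS ∘ₗ Q.com) ((TensorProduct.assoc k H H H).symm Q.PhiInv))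

/-- `U = g¹S(q²) ⊗ g²S(q¹)`. -/
noncomputable def Uel : H ⊗[k] H := Q.finv * Q.swapSS Q.qR

/-- `V = S⁻¹(f²p²) ⊗ S⁻¹(f¹p¹)`. -/
noncomputable def Vel : H ⊗[k] H :=
  (TensorProduct.map Q.Sinv Q.Sinv ∘ₗ (TensorProduct.comm k H H).toLinearMap) (Q.ftw * Q.pR)

/-- `t` is a left integral: `h t = ε(h) t` for all `h`. -/
def IsLeftIntegral (t : H) : Prop := ∀ h : H, h * t = Q.counit h • t

/-- `t` is a right integral: `t h = ε(h) t` for all `h`. -/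
def IsRightIntegral (t : H) : Prop := ∀ h : H, t * h = Q.counit h • t

/-- `l` is a left cointegral:
`l(V²h₂U²) V¹h₁U¹ = μ(x¹) l(h S(x²)) x³` for all `h`. -/
def IsLeftCointegral (l : H →ₗ[k] k) : Prop :=
  ∀ h : H, rctr l (Q.Vel * Q.comul h * Q.Uel)
      = c12 Q.mu (l ∘ₗ LinearMap.mulLeft k h ∘ₗ Q.S) Q.PhiInv

/-- The co-opposite data. -/
noncomputable def cop : QHData k H where
  comul := (Algebra.TensorProduct.comm k H H).toAlgHom.comp Q.comul
  counit := Q.counit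
  Phi := perm321 Q.PhiInv
  PhiInv := perm321 Q.Phi
  S := Q.Sinv
  Sinv := Q.S
  alpha := Q.Sinv Q.alpha
  beta := Q.Sinv Q.beta
  mod := Q.mod

/-- A right cointegral is a left cointegral on the co-opposite quasi-Hopf algebra. -/
def IsRightCointegral (l : H →ₗ[k] k) : Prop := Q.cop.IsLeftCointegral l

/-- `q¹t₁p¹ ⊗ q²t₂p²`. -/
noncomputable def frobE (t : H) : H ⊗[k] H := Q.qR * Q.comul t * Q.pR

/-- The axioms of a quasi-Hopf algebra with (given) modular element. -/
structure IsQuasiHopf : Prop where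
  counit_comul_left : ∀ h : H, lctr Q.cou (Q.comul h) = h
  counit_comul_right : ∀ h : H, rctr Q.cou (Q.comul h) = h
  quasi_coassoc : ∀ h : H,
    Algebra.TensorProduct.map (AlgHom.id k H) Q.comul (Q.comul h)
      = Q.Phi * (Algebra.TensorProduct.assoc k k k H H H)
          (Algebra.TensorProduct.map Q.comul (AlgHom.id k H) (Q.comul h)) * Q.PhiInv
  phi_inv : Q.Phi * Q.PhiInv = 1
  inv_phi : Q.PhiInv * Q.Phi = 1
  cocycle :
    ((1 : H) ⊗ₜ[k] Q.Phi) *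
      Algebra.TensorProduct.map (AlgHom.id k H)
        ((Algebra.TensorProduct.assoc k k k H H H).toAlgHom.comp
          (Algebra.TensorProduct.map Q.comul (AlgHom.id k H))) Q.Phi *
      TensorProduct.map LinearMap.id (TensorProduct.assoc k H H H).toLinearMap
        ((TensorProduct.assoc k H (H ⊗[k] H) H) (Q.Phi ⊗ₜ[k] (1 : H)))
    = Algebra.TensorProduct.map (AlgHom.id k H)
        (Algebra.TensorProduct.map (AlgHom.id k H) Q.comul) Q.Phi *
      (TensorProduct.assoc k H H (H ⊗[k] H))
        (Algebra.TensorProduct.map Q.comul (AlgHom.id k (H ⊗[k] H)) Q.Phi)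
  counit_phi_mid : TensorProduct.map LinearMap.id (lctr Q.cou) Q.Phi = 1
  S_one : Q.S 1 = 1
  S_antimul : ∀ a b : H, Q.S (a * b) = Q.S b * Q.S a
  Sinv_S : ∀ h : H, Q.Sinv (Q.S h) = h
  S_Sinv : ∀ h : H, Q.S (Q.Sinv h) = h
  antipode_left : ∀ h : H,
    LinearMap.mul' k H
      (TensorProduct.map (LinearMap.mulRight k Q.alpha ∘ₗ Q.S) LinearMap.id (Q.comul h))
      = Q.counit h • Q.alpha
  antipode_right : ∀ h : H,
    LinearMap.mul' k H
      (TensorProduct.map (LinearMap.mulRight k Q.beta) Q.S (Q.comul h))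
      = Q.counit h • Q.beta
  antipode_phi :
    (LinearMap.mul' k H ∘ₗ TensorProduct.map (LinearMap.mulRight k Q.beta)
      (LinearMap.mul' k H ∘ₗ
        TensorProduct.map (LinearMap.mulRight k Q.alpha ∘ₗ Q.S) LinearMap.id)) Q.Phi = 1
  antipode_phiInv :
    (LinearMap.mul' k H ∘ₗ TensorProduct.map (LinearMap.mulRight k Q.alpha ∘ₗ Q.S)
      (LinearMap.mul' k H ∘ₗ
        TensorProduct.map (LinearMap.mulRight k Q.beta) Q.S)) Q.PhiInv = 1
  counit_alpha : Q.counit Q.alpha = 1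
  counit_beta : Q.counit Q.beta = 1
  mod_prop : ∀ t : H, Q.IsLeftIntegral t → ∀ h : H, t * h = Q.mod h • t

set_option maxHeartbeats 1000000 in
/-- for the two-dimensional quasi-Hopf algebra `H(2)`:
`t = 1 + g` is a non-zero two-sided integral (so `H(2)` is unimodular), and the
space of left cointegrals is `k·P_g`. -/
theorem stmt19 (Q : QHData k H) (hQ : Q.IsQuasiHopf)
    (hchar : (2 : k) ≠ 0)
    (g : H) (B : Module.Basis (Fin 2) k H) (hB0 : B 0 = 1) (hB1 : B 1 = g)
    (hg2 : g * g = 1)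
    (hcg : Q.comul g = g ⊗ₜ[k] g) (heg : Q.counit g = 1)
    (hPhi : Q.Phi =
      1 - (2 : k) • (((2 : k)⁻¹ • ((1 : H) - g)) ⊗ₜ[k]
        (((2 : k)⁻¹ • ((1 : H) - g)) ⊗ₜ[k] ((2 : k)⁻¹ • ((1 : H) - g)))))
    (hPhiInv : Q.PhiInv = Q.Phi)
    (hS : Q.S g = g) (hSinv : Q.Sinv g = g)
    (halpha : Q.alpha = g) (hbeta : Q.beta = 1) :
    Q.IsLeftIntegral (1 + g) ∧ Q.IsRightIntegral (1 + g) ∧ (1 : H) + g ≠ 0 ∧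
    Q.mod = Q.counit ∧
    (∀ l : H →ₗ[k] k, Q.IsLeftCointegral l ↔ ∃ c : k, l = c • B.coord 1) := by
  set e : H := (2 : k)⁻¹ • ((1 : H) - g) with he
  have h2 : (2:k)⁻¹ * 2 = 1 := inv_mul_cancel₀ hchar
  have h1g : g * ((1:H) - g) = -((1:H) - g) := by rw [mul_sub, mul_one, hg2, neg_sub]
  have hg1 : ((1:H) - g) * g = -((1:H) - g) := by
    rw [sub_mul, one_mul, hg2, ← neg_sub]
  have hgE : g * e = -e := by rw [he, mul_smul_comm, h1g, smul_neg]
  have hEg : e * g = -e := by rw [he, smul_mul_assoc, hg1, smul_neg]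
  have huu : ((1:H) - g) * ((1:H) - g) = (2:k) • ((1:H) - g) := by
    rw [sub_mul, one_mul, h1g, sub_neg_eq_add, two_smul]
  have hEE : e * e = e := by
    rw [he, smul_mul_assoc, mul_smul_comm, huu, smul_smul, smul_smul, mul_assoc, h2, mul_one]
  have hSe : Q.S e = e := by rw [he, map_smul, map_sub, hQ.S_one, hS]
  have hSinv1 : Q.Sinv 1 = 1 := by
    have := hQ.Sinv_S 1; rw [hQ.S_one] at this; exact this
  have hSinvE : Q.Sinv e = e := by rw [he, map_smul, map_sub, hSinv1, hSinv]
  have hEe : Q.counit e = 0 := by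
    rw [he, map_smul, map_sub, map_one, heg, sub_self, smul_zero]
  have hCe : Q.comul e = (2:k)⁻¹ • ((1:H) ⊗ₜ[k] (1:H) - g ⊗ₜ[k] g) := by
    rw [he, map_smul, map_sub, map_one, hcg, Algebra.TensorProduct.one_def]
  have hPhi' : Q.Phi = (1:H) ⊗ₜ[k] ((1:H) ⊗ₜ[k] (1:H)) - (2:k) • e ⊗ₜ[k] (e ⊗ₜ[k] e) := by
    rw [hPhi]; rfl
  have hpR : Q.pR = (1:H) ⊗ₜ[k] (1:H) - (2:k) • e ⊗ₜ[k] e := by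
    simp only [pR, innerPR, hPhiInv, hPhi', map_sub, map_smul, TensorProduct.map_tmul,
      LinearMap.coe_comp, Function.comp_apply, LinearMap.mul'_apply,
      LinearMap.mulRight_apply, LinearMap.id_coe, id_eq, hbeta, mul_one, one_mul,
      hQ.S_one, hSe, hEE]
  have hqR : Q.qR = (1:H) ⊗ₜ[k] g + (2:k) • e ⊗ₜ[k] e := by
    simp only [qR, hPhi', map_sub, map_smul, TensorProduct.map_tmul,
      LinearMap.coe_comp, Function.comp_apply, LinearMap.mul'_apply,
      LinearEquiv.coe_coe, TensorProduct.comm_tmul,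
      LinearMap.mulLeft_apply, LinearMap.id_coe, id_eq, halpha, mul_one, one_mul,
      hSinv, hgE, map_neg, hSinvE, neg_mul, hEE, TensorProduct.tmul_neg, smul_neg,
      sub_neg_eq_add]
  have hMg : Q.Mgamma = g ⊗ₜ[k] g - (2:k) • e ⊗ₜ[k] e := by
    simp only [Mgamma, hPhiInv, hPhi', map_sub, map_smul, TensorProduct.map_tmul,
      LinearMap.coe_comp, Function.comp_apply, LinearMap.mul'_apply,
      LinearMap.mulRight_apply, LinearMap.flip_apply, TensorProduct.mk_apply,
      LinearMap.id_coe, id_eq, halpha, hQ.S_one, hSe, one_mul, mul_one,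
      Algebra.TensorProduct.tmul_mul_tmul, hEg, neg_mul, hgE, map_neg,
      TensorProduct.neg_tmul, TensorProduct.tmul_neg, neg_neg, hEE]
  have hasymm : (TensorProduct.assoc k H H H).symm Q.Phi
      = ((1:H) ⊗ₜ[k] (1:H)) ⊗ₜ[k] (1:H) - (2:k) • (e ⊗ₜ[k] e) ⊗ₜ[k] e := by
    rw [hPhi']
    rw [show ⇑(TensorProduct.assoc k H H H).symm
        = ⇑(TensorProduct.assoc k H H H).symm.toLinearMap from rfl]
    rw [map_sub, map_smul, LinearEquiv.coe_toLinearMap,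
      TensorProduct.assoc_symm_tmul, TensorProduct.assoc_symm_tmul]
  have hga : Q.gammaEl = g ⊗ₜ[k] g - (2:k) • e ⊗ₜ[k] e := by
    simp only [gammaEl, sandwichMid, swapSS, com, hasymm, hMg, map_sub, map_smul,
      TensorProduct.map_tmul, TensorProduct.comm_tmul,
      LinearMap.coe_comp, Function.comp_apply, LinearEquiv.coe_coe,
      AlgHom.toLinearMap_apply, map_one, hCe, hSe, hQ.S_one, LinearMap.mul'_apply,
      LinearMap.mulLeft_apply, LinearMap.id_coe, id_eq,
      Algebra.TensorProduct.tmul_mul_tmul, mul_sub, sub_mul, mul_smul_comm,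
      smul_mul_assoc, mul_one, one_mul, hg2, hEE, hEg, hgE, hg1, h1g,
      mul_neg, neg_mul, TensorProduct.tmul_neg, TensorProduct.neg_tmul,
      smul_neg, neg_neg, TensorProduct.tmul_sub, TensorProduct.sub_tmul,
      smul_sub, smul_smul]
    match_scalars <;> (try field_simp) <;> ring1
  have hftw : Q.ftw = (1:H) ⊗ₜ[k] (1:H) - (2:k) • e ⊗ₜ[k] e := by
    simp only [ftw, sandwichMid, swapSS, com, innerPR, hPhiInv, hPhi', hga, map_sub,
      map_smul, TensorProduct.map_tmul, TensorProduct.comm_tmul,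
      LinearMap.coe_comp, Function.comp_apply, LinearEquiv.coe_coe,
      AlgHom.toLinearMap_apply, map_one, Algebra.TensorProduct.one_def,
      hCe, hSe, hS, hQ.S_one, hbeta,
      LinearMap.mul'_apply, LinearMap.mulLeft_apply, LinearMap.mulRight_apply,
      LinearMap.id_coe, id_eq,
      Algebra.TensorProduct.tmul_mul_tmul, mul_sub, sub_mul, mul_smul_comm,
      smul_mul_assoc, mul_one, one_mul, hg2, hEE, hEg, hgE, hg1, h1g,
      mul_neg, neg_mul, TensorProduct.tmul_neg, TensorProduct.neg_tmul,
      smul_neg, neg_neg, TensorProduct.tmul_sub, TensorProduct.sub_tmul,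
      smul_sub, smul_smul]
    match_scalars <;> (try field_simp) <;> ring1
  have hMd : Q.Mdelta = (1:H) ⊗ₜ[k] (1:H) - (2:k) • e ⊗ₜ[k] e := by
    simp only [Mdelta, innerPR, hPhiInv, hPhi', map_sub, map_smul,
      TensorProduct.map_tmul, LinearMap.coe_comp, Function.comp_apply,
      LinearMap.mul'_apply, LinearMap.mulRight_apply, LinearMap.id_coe, id_eq,
      hbeta, mul_one, one_mul, hQ.S_one, hSe, hEE]
  have hde : Q.deltaEl = (1:H) ⊗ₜ[k] (1:H) - (2:k) • e ⊗ₜ[k] e := by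
    simp only [deltaEl, sandwichMid, swapSS, com, hPhi', hMd, map_sub, map_smul,
      TensorProduct.map_tmul, TensorProduct.comm_tmul,
      LinearMap.coe_comp, Function.comp_apply, LinearEquiv.coe_coe,
      AlgHom.toLinearMap_apply, map_one, hCe, hSe, hQ.S_one,
      LinearMap.mul'_apply, LinearMap.mulLeft_apply, LinearMap.id_coe, id_eq,
      Algebra.TensorProduct.tmul_mul_tmul, mul_sub, sub_mul, mul_smul_comm,
      smul_mul_assoc, mul_one, one_mul, hg2, hEE, hEg, hgE, hg1, h1g,
      mul_neg, neg_mul, TensorProduct.tmul_neg, TensorProduct.neg_tmul,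
      smul_neg, neg_neg, TensorProduct.tmul_sub, TensorProduct.sub_tmul,
      smul_sub, smul_smul]
    match_scalars <;> (try field_simp) <;> ring1
  have hasymm' : (TensorProduct.assoc k H H H).symm Q.PhiInv
      = ((1:H) ⊗ₜ[k] (1:H)) ⊗ₜ[k] (1:H) - (2:k) • (e ⊗ₜ[k] e) ⊗ₜ[k] e := by
    rw [hPhiInv]; exact hasymm
  have hfinv : Q.finv = (1:H) ⊗ₜ[k] (1:H) - (2:k) • e ⊗ₜ[k] e := by
    simp only [finv, sandwichMid, swapSS, com, hasymm', hde, map_sub, map_smul,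
      TensorProduct.map_tmul, TensorProduct.comm_tmul,
      LinearMap.coe_comp, Function.comp_apply, LinearEquiv.coe_coe,
      AlgHom.toLinearMap_apply, map_one, Algebra.TensorProduct.one_def,
      hcg, hCe, hSe, hS, hQ.S_one, halpha,
      LinearMap.mul'_apply, LinearMap.mulLeft_apply, LinearMap.mulRight_apply,
      LinearMap.id_coe, id_eq, map_neg,
      Algebra.TensorProduct.tmul_mul_tmul, mul_sub, sub_mul, mul_smul_comm,
      smul_mul_assoc, mul_one, one_mul, hg2, hEE, hEg, hgE, hg1, h1g,
      mul_neg, neg_mul, TensorProduct.tmul_neg, TensorProduct.neg_tmul,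
      smul_neg, neg_neg, TensorProduct.tmul_sub, TensorProduct.sub_tmul,
      smul_sub, smul_smul]
    match_scalars <;> (try field_simp) <;> ring1
  have hU : Q.Uel = g ⊗ₜ[k] (1:H) := by
    simp only [Uel, swapSS, hfinv, hqR, map_add, map_smul,
      TensorProduct.map_tmul, TensorProduct.comm_tmul,
      LinearMap.coe_comp, Function.comp_apply, LinearEquiv.coe_coe,
      hSe, hS, hQ.S_one,
      Algebra.TensorProduct.tmul_mul_tmul, mul_sub, sub_mul, mul_add, add_mul,
      mul_smul_comm, smul_mul_assoc, mul_one, one_mul, hg2, hEE, hEg, hgE,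
      mul_neg, neg_mul, TensorProduct.tmul_neg, TensorProduct.neg_tmul,
      smul_neg, neg_neg, smul_smul]
    match_scalars <;> (try field_simp) <;> ring1
  have hV : Q.Vel = (1:H) ⊗ₜ[k] (1:H) := by
    simp only [Vel, hftw, hpR,
      mul_sub, sub_mul, Algebra.TensorProduct.tmul_mul_tmul,
      mul_smul_comm, smul_mul_assoc, mul_one, one_mul, hEE, smul_smul,
      map_sub, map_smul, TensorProduct.map_tmul, TensorProduct.comm_tmul,
      LinearMap.coe_comp, Function.comp_apply, LinearEquiv.coe_coe,
      hSinv1, hSinvE, smul_sub]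
    match_scalars <;> (try field_simp) <;> ring1
  -- decomposition along the basis
  have hdec : ∀ h : H, h = B.repr h 0 • (1:H) + B.repr h 1 • g := by
    intro h
    have hsum := B.sum_repr h
    rw [Fin.sum_univ_two, hB0, hB1] at hsum
    exact hsum.symm
  have hli : Q.IsLeftIntegral (1 + g) := by
    intro h
    rw [hdec h]
    simp only [add_mul, smul_mul_assoc, one_mul, mul_add, mul_one, hg2,
      map_add, map_smul, map_one, heg, smul_eq_mul, mul_one]
    module
  have hri : Q.IsRightIntegral (1 + g) := by
    intro h
    rw [hdec h]
    simp only [mul_add, mul_smul_comm, one_mul, add_mul, mul_one, hg2,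
      map_add, map_smul, map_one, heg, smul_eq_mul]
    module
  have hne : (1:H) + g ≠ 0 := by
    intro h0
    have h1 : B.repr ((1:H) + g) 0 = 1 := by
      rw [← hB0, ← hB1, B.repr.map_add]
      simp [Finsupp.single_apply]
    rw [h0, B.repr.map_zero] at h1
    simp at h1
  have hmodeq : Q.mod = Q.counit := by
    apply AlgHom.ext
    intro h
    have ha := hQ.mod_prop (1 + g) hli h
    have hb := hri h
    have hc : (Q.mod h - Q.counit h) • ((1:H) + g) = 0 := by
      rw [sub_smul, ← ha, ← hb, sub_self]
    by_cases h4 : Q.mod h - Q.counit h = 0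
    · exact sub_eq_zero.mp h4
    · exfalso
      apply hne
      have h5 := congrArg (fun x => (Q.mod h - Q.counit h)⁻¹ • x) hc
      simpa [smul_smul, inv_mul_cancel₀ h4] using h5
  have hgne : g ≠ 1 := by
    intro hgeq
    have hBB : B 1 = B 0 := by rw [hB0, hB1, hgeq]
    have := B.injective hBB
    simp at this
  have hmu1 : Q.mu 1 = 1 := by simp [mu, hmodeq]
  have hmue : Q.mu e = 0 := by simp [mu, hmodeq, hEe]
  have hRHS : ∀ (l : H →ₗ[k] k) (h : H),
      c12 Q.mu (l ∘ₗ LinearMap.mulLeft k h ∘ₗ Q.S) Q.PhiInv = l h • (1:H) := by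
    intro l h
    rw [hPhiInv, hPhi']
    simp only [c12, lctr, map_sub, map_smul, TensorProduct.map_tmul,
      LinearMap.coe_comp, Function.comp_apply, LinearEquiv.coe_coe,
      TensorProduct.lid_tmul, LinearMap.mulLeft_apply, LinearMap.id_coe, id_eq,
      hmu1, hmue, hQ.S_one, mul_one, one_smul, zero_smul, smul_zero, sub_zero]
  have hLHS : ∀ (l : H →ₗ[k] k) (h : H),
      rctr l (Q.Vel * Q.comul h * Q.Uel)
        = B.repr h 0 • l 1 • g + B.repr h 1 • l g • (1:H) := by
    intro l h
    rw [hV, hU]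
    conv_lhs => rw [hdec h]
    simp only [map_add, map_smul, map_one, hcg, add_mul, mul_add,
      smul_mul_assoc, mul_smul_comm, Algebra.TensorProduct.one_def,
      Algebra.TensorProduct.tmul_mul_tmul, one_mul, mul_one, hg2,
      rctr, TensorProduct.map_tmul, LinearMap.coe_comp, Function.comp_apply,
      LinearEquiv.coe_coe, TensorProduct.rid_tmul, LinearMap.id_coe, id_eq,
      smul_smul]
  refine ⟨hli, hri, hne, hmodeq, ?_⟩
  intro l
  constructor
  · intro hl
    have hr0 : B.repr (1:H) 0 = 1 := by rw [← hB0]; simp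
    have hr1 : B.repr (1:H) 1 = 0 := by rw [← hB0]; simp [Finsupp.single_apply]
    have h0 : l 1 = 0 := by
      have hco := hl 1
      rw [hLHS l 1, hRHS l 1, hr0, hr1] at hco
      simp only [one_smul, zero_smul, add_zero, smul_zero, zero_add] at hco
      have hz : l 1 • (g - (1:H)) = 0 := by
        rw [smul_sub, hco, sub_self]
      rcases smul_eq_zero.mp hz with h4 | h4
      · exact h4
      · exact absurd (sub_eq_zero.mp h4) hgne
    refine ⟨l g, ?_⟩
    apply B.ext
    intro i
    fin_cases i
    · show l (B 0) = (l g • B.coord 1) (B 0)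
      rw [hB0]
      simp only [LinearMap.smul_apply, Module.Basis.coord_apply, smul_eq_mul, h0, hr1, mul_zero]
    · show l (B 1) = (l g • B.coord 1) (B 1)
      have hrg1 : B.repr g 1 = 1 := by rw [← hB1]; simp
      rw [hB1]
      simp only [LinearMap.smul_apply, Module.Basis.coord_apply, smul_eq_mul, hrg1, mul_one]
  · rintro ⟨c, rfl⟩
    intro h
    rw [hLHS, hRHS]
    have hv1 : (c • B.coord 1) (1:H) = 0 := by
      rw [← hB0]; simp [Finsupp.single_apply]
    have hvg : (c • B.coord 1) g = c := by
      rw [← hB1]; simp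
    have hvh : (c • B.coord 1) h = c * B.repr h 1 := by
      simp [Module.Basis.coord_apply, smul_eq_mul]
    rw [hv1, hvg, hvh]
    simp only [smul_zero, zero_smul, zero_add, smul_smul]
    rw [mul_comm]

end QHData
end QuasiHopfPaper
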